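/- arXiv:2108.13348 — 2 statements merged into one kernel-verified Lean document; each statement's English description precedes it below -/
import Mathlib

section
/- For a chi-squared random variable X with n degrees of freedom, for any x > 0, the probability that X - n ≥ 2√(nx) + 2x is at most e^{-x}. -/
open Real
open MeasureTheory ProbabilityTheory Real
lemma log_aux {u : ℝ} (hu0 : 0 ≤ u) (hu1 : u < 1) :
    u ^ 2 / 2 - u ≤ (1 - u) * Real.log (1 - u) := by
  set f : ℝ → ℝ := fun v => v - v ^ 2 / 2 + (1 - v) * Real.log (1 - v) with hf
  have hderiv : ∀ v : ℝ, v < 1 → HasDerivAt f (-v - Real.log (1 - v)) v := by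
    intro v hv
    have hne : (1 : ℝ) - v ≠ 0 := by linarith
    have h1 : HasDerivAt (fun w : ℝ => 1 - w) (-1) v := (hasDerivAt_id v).const_sub 1
    have h2 : HasDerivAt (fun w : ℝ => Real.log (1 - w)) ((1 - v)⁻¹ * -1) v :=
      (Real.hasDerivAt_log hne).comp v h1
    have h3 : HasDerivAt (fun w : ℝ => (1 - w) * Real.log (1 - w))
        (-1 * Real.log (1 - v) + (1 - v) * ((1 - v)⁻¹ * -1)) v := h1.mul h2
    have h4 : HasDerivAt (fun w : ℝ => w - w ^ 2 / 2) (1 - 2 * v ^ 1 / 2) v :=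
      (hasDerivAt_id v).sub ((hasDerivAt_pow 2 v).div_const 2)
    have := h4.add h3
    exact this.congr_deriv (by rw [← mul_assoc, mul_inv_cancel₀ hne]; ring)
  have hmono : MonotoneOn f (Set.Ico (0:ℝ) 1) := by
    apply monotoneOn_of_deriv_nonneg (convex_Ico 0 1)
    · intro v hv
      exact (hderiv v hv.2).continuousAt.continuousWithinAt
    · intro v hv
      rw [interior_Ico] at hv
      exact (hderiv v hv.2).differentiableAt.differentiableWithinAt
    · intro v hv
      rw [interior_Ico] at hv
      rw [(hderiv v hv.2).deriv]
      have : Real.log (1 - v) ≤ (1 - v) - 1 := Real.log_le_sub_one_of_pos (by linarith [hv.2])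
      linarith
  have h0 : f 0 ≤ f u := hmono (by constructor <;> norm_num) ⟨hu0, hu1⟩ hu0
  simp only [hf] at h0
  norm_num [Real.log_one] at h0
  linarith
lemma gauss_density_mul {t : ℝ} (y : ℝ) :
    gaussianPDFReal 0 1 y * Real.exp (t * y ^ 2)
      = (Real.sqrt (2 * π))⁻¹ * Real.exp (-(1/2 - t) * y ^ 2) := by
  simp only [gaussianPDFReal]
  rw [mul_assoc, ← Real.exp_add]
  norm_num
  left
  ring_nf

lemma gauss_smul_eq {t : ℝ} :
    (fun y => (gaussianPDFReal 0 1 y).toNNReal • Real.exp (t * y ^ 2))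
      = fun y => (Real.sqrt (2 * π))⁻¹ * Real.exp (-(1/2 - t) * y ^ 2) := by
  ext y
  rw [NNReal.smul_def, smul_eq_mul, Real.coe_toNNReal _ (gaussianPDFReal_nonneg 0 1 y)]
  exact gauss_density_mul y

lemma integrable_gauss_sq {t : ℝ} (ht : t < 1/2) :
    Integrable (fun y => Real.exp (t * y ^ 2)) (gaussianReal 0 1) := by
  rw [gaussianReal_of_var_ne_zero 0 one_ne_zero]
  have hb : (0:ℝ) < 1/2 - t := by linarith
  rw [gaussianPDF_def]
  have hmeas : Measurable fun y => (gaussianPDFReal 0 1 y).toNNReal :=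
    (measurable_gaussianPDFReal 0 1).real_toNNReal
  simp only [ENNReal.ofReal]
  rw [integrable_withDensity_iff_integrable_smul hmeas, gauss_smul_eq]
  exact (integrable_exp_neg_mul_sq hb).const_mul _

lemma integral_gauss_sq {t : ℝ} (ht : t < 1/2) :
    ∫ y, Real.exp (t * y ^ 2) ∂(gaussianReal 0 1) = (Real.sqrt (1 - 2 * t))⁻¹ := by
  have hb : (0:ℝ) < 1/2 - t := by linarith
  rw [gaussianReal_of_var_ne_zero 0 one_ne_zero, gaussianPDF_def]
  have hmeas : Measurable fun y => (gaussianPDFReal 0 1 y).toNNReal :=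
    (measurable_gaussianPDFReal 0 1).real_toNNReal
  simp only [ENNReal.ofReal]
  rw [integral_withDensity_eq_integral_smul hmeas, gauss_smul_eq, integral_const_mul,
    integral_gaussian]
  rw [show π / (1/2 - t) = 2 * π / (1 - 2 * t) by field_simp]
  rw [Real.sqrt_div (by positivity) (1 - 2 * t), inv_mul_eq_div]
  rw [div_right_comm, div_self (by positivity), one_div]
/-- Laurent–Massart upper-tail bound for a chi-squared random variable with
`n` degrees of freedom, realized as the sum of squares of `n` i.i.d. standard
Gaussian random variables. -/
theorem chiSq_upper_tail {Ω : Type*} [MeasureSpace Ω]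
    [IsProbabilityMeasure (ℙ : Measure Ω)]
    (n : ℕ) (g : Fin n → Ω → ℝ)
    (hmeas : ∀ i, Measurable (g i))
    (hindep : iIndepFun g ℙ)
    (hgauss : ∀ i, Measure.map (g i) ℙ = gaussianReal 0 1)
    (x : ℝ) (hx : 0 < x) :
    (ℙ {ω | 2 * Real.sqrt (n * x) + 2 * x ≤ (∑ i, (g i ω) ^ 2) - n}).toReal
      ≤ Real.exp (-x) := by
  rcases Nat.eq_zero_or_pos n with hn | hn
  · subst hn
    have hempty : {ω : Ω | 2 * Real.sqrt ((0:ℕ) * x) + 2 * x ≤ (∑ i : Fin 0, (g i ω) ^ 2) - (0:ℕ)}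
        = ∅ := by
      ext ω
      simp only [Set.mem_setOf_eq, Finset.univ_eq_empty, Finset.sum_empty, Nat.cast_zero,
        zero_mul, Real.sqrt_zero, mul_zero, sub_zero, zero_add, Set.mem_empty_iff_false,
        iff_false, not_le]
      linarith
    rw [hempty]
    simp [Real.exp_nonneg]
  -- main case
  set s : ℝ := Real.sqrt n with hs_def
  set r : ℝ := Real.sqrt x with hr_def
  have hs : 0 < s := Real.sqrt_pos.mpr (by exact_mod_cast hn)
  have hr : 0 < r := Real.sqrt_pos.mpr hx
  have hns : (n : ℝ) = s ^ 2 := (Real.sq_sqrt (by positivity : (0:ℝ) ≤ (n:ℝ))).symm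
  have hxr : x = r ^ 2 := (Real.sq_sqrt hx.le).symm
  have hnx : Real.sqrt (n * x) = s * r := by
    rw [Real.sqrt_mul (by positivity : (0:ℝ) ≤ (n:ℝ))]
  set t : ℝ := r / (s + 2 * r) with ht_def
  have hden : 0 < s + 2 * r := by linarith
  have ht0 : 0 < t := by positivity
  have ht : t < 1 / 2 := by
    rw [ht_def, div_lt_iff₀ hden]; linarith
  set w : ℝ := 1 - 2 * t with hw_def
  have hw : w = s / (s + 2 * r) := by
    rw [hw_def, ht_def]; field_simp; ring
  have hw0 : 0 < w := by rw [hw]; positivity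
  -- integrability of exp(t * g i ^ 2)
  have hint : ∀ i, Integrable (fun ω => Real.exp (t * (g i ω) ^ 2)) ℙ := by
    intro i
    have h1 : Integrable (fun y => Real.exp (t * y ^ 2)) (Measure.map (g i) ℙ) := by
      rw [hgauss i]; exact integrable_gauss_sq ht
    exact (integrable_map_measure
      (by rw [hgauss i]; exact (integrable_gauss_sq ht).aestronglyMeasurable)
      (hmeas i).aemeasurable).mp h1
  have hmeasY : ∀ i, Measurable (fun ω => (g i ω) ^ 2) := fun i => (hmeas i).pow_const 2
  have hindepY : iIndepFun (fun i (ω : Ω) => (g i ω) ^ 2) ℙ :=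
    hindep.comp (fun _ y => y ^ 2) (fun _ => measurable_id.pow_const 2)
  -- mgf of each square
  have hmgf : ∀ i, mgf (fun ω => (g i ω) ^ 2) ℙ t = (Real.sqrt w)⁻¹ := by
    intro i
    rw [mgf]
    have : ∫ ω, Real.exp (t * (g i ω) ^ 2) ∂ℙ
        = ∫ y, Real.exp (t * y ^ 2) ∂(Measure.map (g i) ℙ) := by
      rw [integral_map (hmeas i).aemeasurable
        (by rw [hgauss i]; exact (integrable_gauss_sq ht).aestronglyMeasurable)]
    rw [this, hgauss i, integral_gauss_sq ht, hw_def]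
  -- Chernoff
  have hsum_int : Integrable (fun ω => Real.exp (t * (∑ i, fun ω => (g i ω) ^ 2) ω)) ℙ :=
    hindepY.integrable_exp_mul_sum hmeasY (fun i _ => hint i)
  have hcher := measure_ge_le_exp_mul_mgf (μ := ℙ)
    (X := ∑ i, fun ω => (g i ω) ^ 2) ((n : ℝ) + (2 * Real.sqrt (n * x) + 2 * x)) ht0.le hsum_int
  rw [hindepY.mgf_sum hmeasY] at hcher
  simp only [hmgf, Finset.prod_const, Finset.card_univ, Fintype.card_fin] at hcher
  -- rewrite the event set
  have hset : {ω : Ω | 2 * Real.sqrt (n * x) + 2 * x ≤ (∑ i, (g i ω) ^ 2) - n}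
      = {ω : Ω | (n : ℝ) + (2 * Real.sqrt (n * x) + 2 * x) ≤ (∑ i, fun ω => (g i ω) ^ 2) ω} := by
    ext ω
    simp only [Set.mem_setOf_eq, Finset.sum_apply]
    constructor <;> intro h <;> linarith
  rw [hset]
  refine hcher.trans ?_
  -- final scalar inequality
  have hpow : ((Real.sqrt w)⁻¹) ^ n = Real.exp ((n : ℝ) * -(Real.log w / 2)) := by
    rw [← Real.log_sqrt hw0.le, ← Real.log_inv, Real.exp_nat_mul,
      Real.exp_log (by positivity)]
  rw [hpow, ← Real.exp_add, Real.exp_le_exp]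
  -- log bound
  have hu1 : 2 * t < 1 := by linarith
  have hlog := log_aux (u := 2 * t) (by positivity) hu1
  rw [show (1 : ℝ) - 2 * t = w from rfl] at hlog
  -- hlog : (2*t)^2/2 - 2*t ≤ w * log w
  have hkey : -t * (s ^ 2 + (2 * (s * r) + 2 * r ^ 2))
      + (s ^ 2 / 2) * ((2 * t - 2 * t ^ 2) / w) = -(r ^ 2) := by
    rw [hw, ht_def]
    field_simp
    ring
  have hlog2 : -(Real.log w) ≤ (2 * t - 2 * t ^ 2) / w := by
    rw [le_div_iff₀ hw0]
    nlinarith [hlog]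
  have hmul : (n : ℝ) * -(Real.log w / 2) ≤ (s ^ 2 / 2) * ((2 * t - 2 * t ^ 2) / w) := by
    rw [hns]
    have := mul_le_mul_of_nonneg_left hlog2 (by positivity : (0:ℝ) ≤ s ^ 2 / 2)
    linarith
  rw [hnx, hns, hxr] at *
  nlinarith [hmul, hkey]
end

section
/- The function γ(t) := (t + √(1+t²)) · ( t / (√(1+t²) − 1) )^t is monotonically increasing on (0, ∞). -/
open Real

private lemma sqrt_gt_one {t : ℝ} (ht : 0 < t) : 1 < Real.sqrt (1 + t ^ 2) := by
  have h1 : (1 : ℝ) < 1 + t ^ 2 := by nlinarith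
  calc (1:ℝ) = Real.sqrt 1 := (Real.sqrt_one).symm
    _ < Real.sqrt (1 + t ^ 2) := Real.sqrt_lt_sqrt (by norm_num) h1

private lemma sqrt_sq' (t : ℝ) : Real.sqrt (1 + t ^ 2) ^ 2 = 1 + t ^ 2 :=
  Real.sq_sqrt (by positivity)

/-- The artanh inequality: `2u ≤ log(1+u) - log(1-u)` for `0 ≤ u < 1`. -/
private lemma two_mul_le_log_sub_log {u : ℝ} (h0 : 0 ≤ u) (h1 : u < 1) :
    2 * u ≤ Real.log (1 + u) - Real.log (1 - u) := by
  set F : ℝ → ℝ := fun x => Real.log (1 + x) - Real.log (1 - x) - 2 * x with hF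
  have key : MonotoneOn F (Set.Ico 0 1) := by
    have hderiv : ∀ x ∈ Set.Ioo (0:ℝ) 1,
        HasDerivAt F (1 / (1 + x) + 1 / (1 - x) - 2) x := by
      intro x hx
      have hx1 : (1:ℝ) + x ≠ 0 := by nlinarith [hx.1]
      have hx2 : (1:ℝ) - x ≠ 0 := by nlinarith [hx.2]
      have d1 : HasDerivAt (fun y : ℝ => Real.log (1 + y)) (1 / (1 + x)) x := by
        have : HasDerivAt (fun y : ℝ => 1 + y) 1 x :=
          (hasDerivAt_id x).const_add 1
        simpa using this.log hx1
      have d2 : HasDerivAt (fun y : ℝ => Real.log (1 - y)) ((-1) / (1 - x)) x := by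
        have : HasDerivAt (fun y : ℝ => 1 - y) (-1) x := by
          simpa using (hasDerivAt_id x).const_sub 1
        simpa using this.log hx2
      have d3 : HasDerivAt (fun y : ℝ => 2 * y) 2 x := by
        simpa using (hasDerivAt_id x).const_mul 2
      have := (d1.sub d2).sub d3
      exact this.congr_deriv (by ring)
    apply monotoneOn_of_deriv_nonneg (convex_Ico 0 1)
    · -- continuity
      apply ContinuousOn.sub
      apply ContinuousOn.sub
      · apply ContinuousOn.log (by fun_prop)
        intro x hx; nlinarith [hx.1, hx.2]
      · apply ContinuousOn.log (by fun_prop)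
        intro x hx; nlinarith [hx.1, hx.2]
      · fun_prop
    · intro x hx
      rw [interior_Ico] at hx
      exact (hderiv x hx).differentiableAt.differentiableWithinAt
    · intro x hx
      rw [interior_Ico] at hx
      rw [(hderiv x hx).deriv]
      have hx1 : (0:ℝ) < 1 + x := by nlinarith [hx.1]
      have hx2 : (0:ℝ) < 1 - x := by nlinarith [hx.2]
      rw [div_add_div _ _ (ne_of_gt hx1) (ne_of_gt hx2), sub_nonneg,
        le_div_iff₀ (by positivity)]
      nlinarith [hx.1]
  have h00 : F 0 = 0 := by simp [hF]
  have := key (Set.mem_Ico.mpr ⟨le_refl 0, by norm_num⟩)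
    (Set.mem_Ico.mpr ⟨h0, h1⟩) h0
  rw [h00] at this
  simp only [hF] at this
  linarith

/-- The exponent function `f(t) = t * log (t / (√(1+t²) - 1))` is monotone on `(0,∞)`. -/
private lemma exponent_monotone :
    MonotoneOn (fun t : ℝ => t * Real.log (t / (Real.sqrt (1 + t ^ 2) - 1)))
      (Set.Ioi 0) := by
  set f : ℝ → ℝ := fun t => t * Real.log (t / (Real.sqrt (1 + t ^ 2) - 1)) with hf
  have hderiv : ∀ t ∈ Set.Ioi (0:ℝ),
      HasDerivAt f (Real.log (t / (Real.sqrt (1 + t ^ 2) - 1))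
        - 1 / Real.sqrt (1 + t ^ 2)) t := by
    intro t ht
    have ht0 : 0 < t := ht
    set s := Real.sqrt (1 + t ^ 2) with hs
    have hs1 : 1 < s := sqrt_gt_one ht0
    have hs0 : 0 < s := lt_trans one_pos hs1
    have hsq : s ^ 2 = 1 + t ^ 2 := sqrt_sq' t
    have hsm1 : s - 1 ≠ 0 := by linarith
    have hne : 1 + t ^ 2 ≠ 0 := by positivity
    have dsqrt : HasDerivAt (fun y : ℝ => Real.sqrt (1 + y ^ 2)) (t / s) t := by
      have dp : HasDerivAt (fun y : ℝ => 1 + y ^ 2) (2 * t) t := by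
        simpa using ((hasDerivAt_pow 2 t).const_add 1)
      have := dp.sqrt hne
      convert this using 1
      rw [← hs]
      field_simp
    have dbase : HasDerivAt (fun y : ℝ => y / (Real.sqrt (1 + y ^ 2) - 1))
        ((1 * (s - 1) - t * (t / s)) / (s - 1) ^ 2) t := by
      exact (hasDerivAt_id t).div (dsqrt.sub_const 1) hsm1
    have hbpos : 0 < t / (s - 1) := div_pos ht0 (by linarith)
    have dlog : HasDerivAt (fun y : ℝ => Real.log (y / (Real.sqrt (1 + y ^ 2) - 1)))
        (((1 * (s - 1) - t * (t / s)) / (s - 1) ^ 2) / (t / (s - 1))) t :=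
      dbase.log (ne_of_gt hbpos)
    have dmul := (hasDerivAt_id t).mul dlog
    have : HasDerivAt f
        (1 * Real.log (t / (s - 1)) +
          t * (((1 * (s - 1) - t * (t / s)) / (s - 1) ^ 2) / (t / (s - 1)))) t := by
      exact dmul
    convert this using 1
    have ht2 : t ^ 2 = (s - 1) * (s + 1) := by nlinarith [hsq]
    have hnum : 1 * (s - 1) - t * (t / s) = -((s - 1) / s) := by
      field_simp
      linear_combination -ht2
    have harith : t * ((1 * (s - 1) - t * (t / s)) / (s - 1) ^ 2 / (t / (s - 1)))
        = -(1 / s) := by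
      rw [hnum]
      field_simp
    rw [one_mul, harith]
    ring
  apply monotoneOn_of_deriv_nonneg (convex_Ioi 0)
  · intro t ht
    exact ((hderiv t ht).differentiableAt.continuousAt).continuousWithinAt
  · intro t ht
    rw [interior_Ioi] at ht
    exact (hderiv t ht).differentiableAt.differentiableWithinAt
  · intro t ht
    rw [interior_Ioi] at ht
    rw [(hderiv t ht).deriv]
    have ht0 : 0 < t := ht
    set s := Real.sqrt (1 + t ^ 2) with hs
    have hs1 : 1 < s := sqrt_gt_one ht0
    have hsq : s ^ 2 = 1 + t ^ 2 := sqrt_sq' t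
    have hs0 : 0 < s := lt_trans one_pos hs1
    -- u = 1/s
    have hu0 : 0 ≤ 1 / s := by positivity
    have hu1 : 1 / s < 1 := by rw [div_lt_one hs0]; exact hs1
    have hineq := two_mul_le_log_sub_log hu0 hu1
    -- log(1+1/s) - log(1-1/s) = log((s+1)/(s-1)) = 2 log(t/(s-1))
    have e1 : (1 : ℝ) + 1 / s = (s + 1) / s := by field_simp
    have e2 : (1 : ℝ) - 1 / s = (s - 1) / s := by field_simp
    have hlogeq : Real.log (1 + 1 / s) - Real.log (1 - 1 / s)
        = Real.log ((s + 1) / (s - 1)) := by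
      rw [e1, e2, Real.log_div (by positivity) (ne_of_gt hs0),
        Real.log_div (by nlinarith) (by nlinarith),
        Real.log_div (by positivity) (by nlinarith)]
      ring
    have hsqbase : (t / (s - 1)) ^ 2 = (s + 1) / (s - 1) := by
      rw [div_pow]
      rw [show t ^ 2 = (s - 1) * (s + 1) by nlinarith, pow_two]
      exact mul_div_mul_left _ _ (by linarith)
    have hbpos : 0 < t / (s - 1) := div_pos ht0 (by linarith)
    have hlog2 : Real.log ((s + 1) / (s - 1)) = 2 * Real.log (t / (s - 1)) := by
      rw [← hsqbase, pow_two, Real.log_mul (ne_of_gt hbpos) (ne_of_gt hbpos)]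
      ring
    rw [hlogeq, hlog2] at hineq
    have : 1 / s ≤ Real.log (t / (s - 1)) := by linarith
    linarith

/-- The function `γ(t) = (t + √(1+t²)) · ( t / (√(1+t²) − 1) )^t` is
monotonically increasing on `(0, ∞)`. -/
theorem gamma_fn_monotoneOn :
    MonotoneOn
      (fun t : ℝ => (t + Real.sqrt (1 + t ^ 2)) *
            (t / (Real.sqrt (1 + t ^ 2) - 1)) ^ t)
      (Set.Ioi 0) := by
  intro a ha b hb hab
  have ha0 : (0:ℝ) < a := ha
  have hb0 : (0:ℝ) < b := hb
  have hsa : 1 < Real.sqrt (1 + a ^ 2) := sqrt_gt_one ha0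
  have hsb : 1 < Real.sqrt (1 + b ^ 2) := sqrt_gt_one hb0
  have hba : 0 < a / (Real.sqrt (1 + a ^ 2) - 1) := div_pos ha0 (by linarith)
  have hbb : 0 < b / (Real.sqrt (1 + b ^ 2) - 1) := div_pos hb0 (by linarith)
  -- first factor monotone
  have h1 : a + Real.sqrt (1 + a ^ 2) ≤ b + Real.sqrt (1 + b ^ 2) := by
    have : Real.sqrt (1 + a ^ 2) ≤ Real.sqrt (1 + b ^ 2) :=
      Real.sqrt_le_sqrt (by nlinarith)
    linarith
  -- second factor monotone via exponent
  have h2 : (a / (Real.sqrt (1 + a ^ 2) - 1)) ^ a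
      ≤ (b / (Real.sqrt (1 + b ^ 2) - 1)) ^ b := by
    rw [Real.rpow_def_of_pos hba, Real.rpow_def_of_pos hbb]
    apply Real.exp_le_exp.mpr
    have := exponent_monotone ha hb hab
    simpa [mul_comm] using this
  have hpos1 : (0:ℝ) ≤ a + Real.sqrt (1 + a ^ 2) := by positivity
  have hpos2 : (0:ℝ) ≤ (a / (Real.sqrt (1 + a ^ 2) - 1)) ^ a :=
    (Real.rpow_pos_of_pos hba a).le
  exact mul_le_mul h1 h2 hpos2 (by positivity)
end
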